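/- Let k be an algebraically closed field of characteristic p > 0 and let ℘ : k((t)) → k((t)) be the Artin–Schreier map ℘(f) = f^p - f. Then the composite of the inclusion of Δ_H := {Laurent polynomials with only terms of negative degree prime to p} into k((t)) with the quotient map k((t)) → k((t))/℘(k((t))) is a bijection. -/

import Mathlib

open HahnSeries

namespace ASProof

noncomputable section

variable {p : ℕ} [Fact p.Prime] {k : Type*} [Field k] [CharP k p]

instance : ExpChar k p := .prime Fact.out

instance : CharP (LaurentSeries k) p :=
  charP_of_injective_ringHom (HahnSeries.C_injective.comp fun _ _ h => h :
    Function.Injective (HahnSeries.C : k →+* LaurentSeries k)) p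

lemma hp2 : 2 ≤ p := (Fact.out : p.Prime).two_le
lemma hp0 : 0 < p := (Fact.out : p.Prime).pos

/-- multiplication by `p` as an order embedding of `ℤ`. -/
def emb (p : ℕ) [Fact p.Prime] : ℤ ↪o ℤ :=
  OrderEmbedding.ofStrictMono (fun n => (p : ℤ) * n)
    (fun a b h => mul_lt_mul_of_pos_left h (by exact_mod_cast hp0))

variable (p) in
/-- The coefficientwise Frobenius with exponents multiplied by `p`. -/
def Fr (x : LaurentSeries k) : LaurentSeries k :=
  embDomain (emb p) (x.map (frobenius k p))

lemma Fr_coeff_mul (x : LaurentSeries k) (n : ℤ) :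
    (Fr p x).coeff ((p : ℤ) * n) = (x.coeff n) ^ p := by
  have : ((p : ℤ) * n) = emb p n := rfl
  rw [Fr, this, embDomain_coeff, HahnSeries.map_coeff, frobenius_def]

lemma Fr_coeff_not_dvd (x : LaurentSeries k) {m : ℤ} (h : ¬ (p : ℤ) ∣ m) :
    (Fr p x).coeff m = 0 := by
  apply embDomain_notin_range
  rintro ⟨a, rfl⟩
  exact h ⟨a, rfl⟩

lemma Fr_add (x y : LaurentSeries k) : Fr p (x + y) = Fr p x + Fr p y := by
  ext m
  rcases em ((p : ℤ) ∣ m) with ⟨n, rfl⟩ | h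
  · simp [Fr_coeff_mul, HahnSeries.coeff_add, add_pow_char]
  · simp [Fr_coeff_not_dvd _ h, HahnSeries.coeff_add]

variable (p) in
/-- `Fr` as an additive monoid hom. -/
def FrHom : LaurentSeries k →+ LaurentSeries k :=
  AddMonoidHom.mk' (Fr p) (Fr_add)

lemma Fr_single (a : ℤ) (r : k) :
    Fr p (single a r : LaurentSeries k) = single ((p : ℤ) * a) (r ^ p) := by
  ext m
  rcases em ((p : ℤ) ∣ m) with ⟨n, rfl⟩ | h
  · rw [Fr_coeff_mul]
    rcases eq_or_ne n a with rfl | hna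
    · simp
    · rw [coeff_single_of_ne hna, coeff_single_of_ne, zero_pow hp0.ne']
      exact fun hc => hna (by
        have : (p : ℤ) ≠ 0 := by exact_mod_cast hp0.ne'
        exact mul_left_cancel₀ this hc)
  · rw [Fr_coeff_not_dvd _ h, coeff_single_of_ne]
    rintro rfl
    exact h ⟨a, rfl⟩

lemma coeff_sum {ι : Type*} (T : Finset ι) (F : ι → LaurentSeries k) (j : ℤ) :
    (∑ i ∈ T, F i).coeff j = ∑ i ∈ T, (F i).coeff j :=
  map_sum (coeff.addMonoidHom j) F T


lemma support_finite_below (x : LaurentSeries k) (N : ℤ) :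
    (x.support ∩ Set.Iio N).Finite := by
  rcases eq_or_ne x 0 with rfl | hx
  · simp
  · refine (Set.finite_Icc x.order (N - 1)).subset ?_
    rintro i ⟨hi, hi'⟩
    have : x.order ≤ i := order_le_of_coeff_ne_zero hi
    have : i < N := hi'
    constructor <;> omega

lemma frob_eq (x : LaurentSeries k) : x ^ p = Fr p x := by
  classical
  ext m
  set N : ℤ := max m 0 + 1 with hN
  have hmN : m < N := by simp [hN]
  have h0N : 0 < N := by simp [hN]
  set T : Finset ℤ := (support_finite_below x N).toFinset with hT
  set x1 : LaurentSeries k := ∑ i ∈ T, single i (x.coeff i) with hx1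
  set x2 : LaurentSeries k := x - x1 with hx2
  have hx1coeff : ∀ j, x1.coeff j = if j ∈ T then x.coeff j else 0 := by
    intro j
    rw [hx1, coeff_sum]
    rcases em (j ∈ T) with hj | hj
    · rw [if_pos hj, Finset.sum_eq_single_of_mem j hj (fun i _ hij =>
        coeff_single_of_ne (Ne.symm hij)), coeff_single_same]
    · rw [if_neg hj]
      exact Finset.sum_eq_zero fun i hi => coeff_single_of_ne (fun hji => hj (hji ▸ hi))
  have hx2coeff : ∀ j < N, x2.coeff j = 0 := by
    intro j hj
    rw [hx2, HahnSeries.coeff_sub, hx1coeff]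
    by_cases hjs : x.coeff j = 0
    · simp [hjs]
    · rw [if_pos, sub_self]
      simp only [hT, Set.Finite.mem_toFinset, Set.mem_inter_iff, Set.mem_Iio]
      exact ⟨hjs, hj⟩
  have hsplit : x = x1 + x2 := by rw [hx2]; ring
  have hx1p : x1 ^ p = Fr p x1 := by
    have h1 : Fr p x1 = ∑ i ∈ T, Fr p (single i (x.coeff i)) := map_sum (FrHom p) _ T
    rw [hx1, sum_pow_char, h1]
    refine Finset.sum_congr rfl fun i _ => ?_
    rw [single_pow, Fr_single, nsmul_eq_mul]
  have hx2p : (x2 ^ p).coeff m = 0 := by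
    rcases eq_or_ne x2 0 with h | h
    · simp [h, zero_pow hp0.ne']
    · have hord : N ≤ x2.order := by
        by_contra hlt
        push_neg at hlt
        exact (mt coeff_order_eq_zero.mp h) (hx2coeff _ hlt)
      apply coeff_eq_zero_of_lt_order
      rw [order_pow, nsmul_eq_mul]
      have h1 : x2.order ≤ (p : ℤ) * x2.order :=
        le_mul_of_one_le_left (le_trans h0N.le hord) (by exact_mod_cast hp0)
      omega
  have hFr2 : (Fr p x2).coeff m = 0 := by
    rcases em ((p : ℤ) ∣ m) with ⟨q, rfl⟩ | hd
    · rw [Fr_coeff_mul]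
      have hq : q < N := by
        rcases le_or_gt 0 q with hq0 | hq0
        · have : q ≤ (p : ℤ) * q := le_mul_of_one_le_left hq0 (by exact_mod_cast hp0)
          omega
        · omega
      rw [hx2coeff _ hq, zero_pow hp0.ne']
    · exact Fr_coeff_not_dvd _ hd
  rw [hsplit, add_pow_char, Fr_add, HahnSeries.coeff_add, HahnSeries.coeff_add,
    hx2p, hFr2, hx1p]

lemma pow_coeff_mul (x : LaurentSeries k) (n : ℤ) :
    (x ^ p).coeff ((p : ℤ) * n) = (x.coeff n) ^ p := by
  rw [frob_eq, Fr_coeff_mul]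

lemma pow_coeff_not_dvd (x : LaurentSeries k) {m : ℤ} (h : ¬ (p : ℤ) ∣ m) :
    (x ^ p).coeff m = 0 := by
  rw [frob_eq]; exact Fr_coeff_not_dvd _ h


lemma coeff_sum_single (T : Finset ℤ) (c : ℤ → k) (j : ℤ) :
    (∑ i ∈ T, (single i (c i) : LaurentSeries k)).coeff j
      = if j ∈ T then c j else 0 := by
  classical
  rw [coeff_sum]
  rcases em (j ∈ T) with hj | hj
  · rw [if_pos hj, Finset.sum_eq_single_of_mem j hj (fun i _ hij =>
      coeff_single_of_ne (Ne.symm hij)), coeff_single_same]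
  · rw [if_neg hj]
    exact Finset.sum_eq_zero fun i hi => coeff_single_of_ne (fun hji => hj (hji ▸ hi))

variable (p) in
/-- Coefficient recursion solving `h ^ p - h = w` on the nonnegative part. -/
def asc {k : Type*} [Field k] (w : ℕ → k) (α : k) : ℕ → k
  | 0 => α
  | (n+1) =>
      (if h : p ∣ (n+1) ∧ 2 ≤ p then (asc w α ((n+1)/p)) ^ p else 0) - w (n+1)
  decreasing_by exact Nat.div_lt_self (Nat.succ_pos n) h.2

lemma asc_succ (w : ℕ → k) (α : k) (n : ℕ) :
    asc p w α (n+1) = (if p ∣ (n+1) then (asc p w α ((n+1)/p)) ^ p else 0) - w (n+1) := by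
  rw [asc]
  congr 1
  by_cases h : p ∣ (n+1) <;> simp [h, hp2 (p := p)]

lemma asc_zero (w : ℕ → k) (α : k) : asc p w α 0 = α := by rw [asc]

variable (p) in
/-- The Hahn series supported in nonnegative degrees with coefficients `asc`. -/
def mkNonneg (w : ℕ → k) (α : k) : LaurentSeries k where
  coeff i := if 0 ≤ i then asc p w α i.toNat else 0
  isPWO_support' := by
    have hwf : (Set.Ici (0:ℤ)).IsWF := bddBelow_Ici.wellFoundedOn_lt
    refine Set.IsPWO.mono hwf.isPWO ?_
    intro i hi
    simp only [Function.mem_support] at hi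
    by_contra hneg
    simp only [Set.mem_Ici, not_le] at hneg
    exact hi (if_neg (not_le.mpr hneg))

lemma mkNonneg_coeff_nat (w : ℕ → k) (α : k) (n : ℕ) :
    (mkNonneg p w α).coeff (n : ℤ) = asc p w α n := by
  show (if (0:ℤ) ≤ (n:ℤ) then asc p w α (n:ℤ).toNat else 0) = _
  rw [if_pos (Int.natCast_nonneg n), Int.toNat_natCast]

lemma mkNonneg_coeff_neg (w : ℕ → k) (α : k) (i : ℤ) (hi : i < 0) :
    (mkNonneg p w α).coeff i = 0 := by
  show (if (0:ℤ) ≤ i then asc p w α i.toNat else 0) = 0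
  rw [if_neg (not_le.mpr hi)]

variable (p) in
/-- The series we must show each `f` is equivalent to a unique member of. -/
def Good (f : LaurentSeries k) : Prop :=
  ∃ g h : LaurentSeries k,
    (∀ i : ℤ, (0 ≤ i ∨ (p : ℤ) ∣ i) → g.coeff i = 0) ∧ f = g + (h ^ p - h)

lemma good_zero : Good p (0 : LaurentSeries k) :=
  ⟨0, 0, by simp, by simp [zero_pow hp0.ne']⟩

lemma good_add {f1 f2 : LaurentSeries k} (h1 : Good p f1) (h2 : Good p f2) :
    Good p (f1 + f2) := by
  obtain ⟨g1, h1, hg1, rfl⟩ := h1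
  obtain ⟨g2, h2, hg2, rfl⟩ := h2
  refine ⟨g1 + g2, h1 + h2, fun i hi => ?_, by rw [add_pow_char]; ring⟩
  rw [HahnSeries.coeff_add, hg1 i hi, hg2 i hi, add_zero]

section AlgClosed

variable [IsAlgClosed k]

lemma good_nonneg (f : LaurentSeries k) (hf : ∀ i < (0 : ℤ), f.coeff i = 0) :
    Good p f := by
  classical
  obtain ⟨α, hα⟩ : ∃ α : k, α ^ p - α = f.coeff 0 := by
    have hdeg : (Polynomial.X ^ p - Polynomial.X - Polynomial.C (f.coeff 0) : Polynomial k).degree ≠ 0 := by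
      rw [sub_sub, Polynomial.degree_sub_eq_left_of_degree_lt]
      · simp [hp0.ne']
      · rw [Polynomial.degree_X_pow]
        refine lt_of_le_of_lt (Polynomial.degree_add_le _ _) (max_lt ?_ ?_)
        · exact lt_of_le_of_lt Polynomial.degree_X_le (by exact_mod_cast hp2 (p := p))
        · exact lt_of_le_of_lt (Polynomial.degree_C_le) (by
            have : (0:ℕ) < p := hp0
            exact_mod_cast this)
    obtain ⟨α, hα⟩ := IsAlgClosed.exists_root _ hdeg
    refine ⟨α, ?_⟩
    have := hα
    simp only [Polynomial.IsRoot, Polynomial.eval_sub, Polynomial.eval_pow, Polynomial.eval_X,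
      Polynomial.eval_C] at this
    linear_combination this
  set w : ℕ → k := fun n => f.coeff (n : ℤ) with hw
  set h : LaurentSeries k := mkNonneg p w α with hh
  have hcoeffn : ∀ n : ℕ, h.coeff (n : ℤ) = asc p w α n := fun n => mkNonneg_coeff_nat w α n
  have hcoeffneg : ∀ i : ℤ, i < 0 → h.coeff i = 0 := fun i hi => mkNonneg_coeff_neg w α i hi
  refine ⟨0, h, by simp, ?_⟩
  rw [zero_add]
  ext i
  rw [HahnSeries.coeff_sub]
  rcases lt_or_ge i 0 with hi | hi
  · rw [hf i hi, hcoeffneg i hi, sub_zero]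
    rcases em ((p : ℤ) ∣ i) with ⟨q, rfl⟩ | hd
    · have hq : q < 0 := by
        by_contra hq
        push_neg at hq
        have := mul_nonneg (by exact_mod_cast hp0.le : (0:ℤ) ≤ (p:ℤ)) hq
        omega
      rw [pow_coeff_mul, hcoeffneg q hq, zero_pow hp0.ne']
    · exact (pow_coeff_not_dvd _ hd).symm
  · lift i to ℕ using hi with n
    have hpow : (h ^ p).coeff (n : ℤ)
        = if p ∣ n then (asc p w α (n / p)) ^ p else 0 := by
      by_cases hpn : p ∣ n
      · obtain ⟨q, rfl⟩ := hpn
        have hc : ((p * q : ℕ) : ℤ) = (p : ℤ) * (q : ℤ) := by push_cast; ring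
        rw [hc, pow_coeff_mul, hcoeffn, if_pos ⟨q, rfl⟩,
          Nat.mul_div_cancel_left q hp0]
      · rw [if_neg hpn, pow_coeff_not_dvd]
        rwa [Int.natCast_dvd_natCast] at *
    rw [hpow, hcoeffn]
    cases n with
    | zero =>
      simp only [Nat.dvd_zero, if_pos, Nat.zero_div, asc_zero]
      show f.coeff ((0:ℕ) : ℤ) = α ^ p - α
      exact_mod_cast hα.symm
    | succ m =>
      rw [asc_succ]
      show w (m+1) = _
      ring

lemma good_single : ∀ n : ℕ, 0 < n → ∀ c : k, Good p (single (-(n : ℤ)) c) := by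
  intro n
  induction n using Nat.strong_induction_on with
  | _ n IH =>
    intro hn c
    by_cases hpn : p ∣ n
    · obtain ⟨m, rfl⟩ := hpn
      have hm : 0 < m := by
        rcases Nat.eq_zero_or_pos m with rfl | hm
        · simp at hn
        · exact hm
      obtain ⟨c', hc'⟩ := surjective_frobenius k p c
      rw [frobenius_def] at hc'
      set S : LaurentSeries k := single (-(m : ℤ)) c' with hS
      have hSp : S ^ p = single (-((p * m : ℕ) : ℤ)) c := by
        rw [hS, single_pow, nsmul_eq_mul, hc']
        congr 1
        push_cast
        ring
      have hsplit : (single (-((p * m : ℕ) : ℤ)) c : LaurentSeries k) = (S ^ p - S) + S := by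
        rw [hSp]; ring
      rw [hsplit]
      refine good_add ⟨0, S, by simp, by rw [zero_add]⟩ ?_
      have hlt : m < p * m := by
        have := hp2 (p := p)
        calc m = 1 * m := (one_mul m).symm
        _ < p * m := (Nat.mul_lt_mul_right hm).mpr (by omega)
      exact IH m hlt hm c'
    · refine ⟨single (-(n : ℤ)) c, 0, fun i hi => ?_, by simp [zero_pow hp0.ne']⟩
      apply coeff_single_of_ne
      rintro rfl
      rcases hi with hi | hi
      · have : (0 : ℤ) < n := by exact_mod_cast hn
        omega
      · rw [dvd_neg, Int.natCast_dvd_natCast] at hi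
        exact hpn hi

lemma good_all (f : LaurentSeries k) : Good p f := by
  classical
  set T : Finset ℤ := (support_finite_below f 0).toFinset with hT
  set fn : LaurentSeries k := ∑ i ∈ T, single i (f.coeff i) with hfn
  have hTneg : ∀ i ∈ T, i < 0 := by
    intro i hi
    rw [hT, Set.Finite.mem_toFinset] at hi
    exact hi.2
  have h1 : Good p fn := by
    rw [hfn]
    refine Finset.sum_induction _ _ (fun a b ha hb => good_add ha hb) good_zero ?_
    intro i hi
    have hineg := hTneg i hi
    have hcast : ((-i).toNat : ℤ) = -i := Int.toNat_of_nonneg (by omega)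
    have : i = -(((-i).toNat : ℕ) : ℤ) := by omega
    rw [this]
    exact good_single _ (by omega) _
  have h2 : Good p (f - fn) := by
    apply good_nonneg
    intro i hi
    rw [HahnSeries.coeff_sub, hfn, coeff_sum_single]
    by_cases his : f.coeff i = 0
    · rw [his]
      simp
    · rw [if_pos, sub_self]
      rw [hT, Set.Finite.mem_toFinset]
      exact ⟨his, hi⟩
  have : f = fn + (f - fn) := by ring
  rw [this]
  exact good_add h1 h2

end AlgClosed

lemma as_eq_zero (g : LaurentSeries k)
    (hg : ∀ i : ℤ, (0 ≤ i ∨ (p : ℤ) ∣ i) → g.coeff i = 0)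
    (H : LaurentSeries k) (hH : g = H ^ p - H) : g = 0 := by
  rcases eq_or_ne H 0 with rfl | hne
  · rw [hH, zero_pow hp0.ne', sub_zero]
  rcases lt_or_ge H.order 0 with hv | hv
  · exfalso
    have h1 : g.coeff ((p : ℤ) * H.order) = 0 := hg _ (Or.inr ⟨_, rfl⟩)
    have hlt : (p : ℤ) * H.order < H.order := by
      have h2 : (2 : ℤ) ≤ (p : ℤ) := by exact_mod_cast hp2 (p := p)
      nlinarith
    have h2 : H.coeff ((p : ℤ) * H.order) = 0 := coeff_eq_zero_of_lt_order hlt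
    rw [hH, HahnSeries.coeff_sub, pow_coeff_mul, h2, sub_zero] at h1
    exact (mt coeff_order_eq_zero.mp hne) (pow_eq_zero_iff hp0.ne' |>.mp h1)
  · ext i
    rcases lt_or_ge i 0 with hi | hi
    · rw [hH, HahnSeries.coeff_sub, HahnSeries.coeff_zero,
        coeff_eq_zero_of_lt_order (lt_of_lt_of_le hi hv), sub_zero]
      rcases em ((p : ℤ) ∣ i) with ⟨q, rfl⟩ | hd
      · have hq : q < 0 := by
          by_contra hq
          push_neg at hq
          have := mul_nonneg (by exact_mod_cast hp0.le : (0:ℤ) ≤ (p:ℤ)) hq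
          omega
        rw [pow_coeff_mul, coeff_eq_zero_of_lt_order (lt_of_lt_of_le hq hv),
          zero_pow hp0.ne']
      · exact pow_coeff_not_dvd _ hd
    · rw [hg i (Or.inl hi), HahnSeries.coeff_zero]

end

end ASProof

theorem stmt2 (p : ℕ) [Fact p.Prime] (k : Type*) [Field k] [IsAlgClosed k] [CharP k p]
    (f : LaurentSeries k) :
    ∃! g : LaurentSeries k,
      (∀ i : ℤ, (0 ≤ i ∨ (p : ℤ) ∣ i) → g.coeff i = 0) ∧
        ∃ h : LaurentSeries k, f = g + (h ^ p - h) := by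
  obtain ⟨g, h, hg, hf⟩ := ASProof.good_all (p := p) f
  refine ⟨g, ⟨hg, h, hf⟩, ?_⟩
  rintro g' ⟨hg', h', hf'⟩
  have key : g' - g = (h - h') ^ p - (h - h') := by
    rw [sub_pow_char]
    linear_combination hf - hf'
  have := ASProof.as_eq_zero (g' - g)
    (fun i hi => by rw [HahnSeries.coeff_sub, hg' i hi, hg i hi, sub_zero]) _ key
  rwa [sub_eq_zero] at this
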